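/- Let x be a root of unity with x ≠ 1, let p ≥ 1 and n ≥ 1 be integers, and let s ∈ ℂ with |s−n| < 1. Then (−1)^{p−1}·φ^{(p−1)}(s+1/2;x)/(p−1)! = x^{−n−1} · ∑_{k=0}^∞ C(k+p−1,p−1) · (−1)^k · ( ti_{k+p}(x) − t_n(k+p;x) ) · (s−n)^k, where φ^{(p−1)} denotes the (p−1)-st derivative of φ with respect to s and C(a,b) is the binomial coefficient. -/

import Mathlib

open Filter Finset

/-- Limit of a sequence of complex numbers (junk value if divergent). -/
noncomputable def seqLim (f : ℕ → ℂ) : ℂ := lim (Filter.map f Filter.atTop)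

/-- Finite sum `t_n(p;z) = ∑_{k=1}^n z^k/(k-1/2)^p`. -/
noncomputable def tFin (p : ℕ) (z : ℂ) (n : ℕ) : ℂ :=
  ∑ k ∈ Finset.Icc 1 n, z ^ k / ((k : ℂ) - 1/2) ^ p

/-- t-polylogarithm `ti_p(z) = ∑_{n=1}^∞ z^n/(n-1/2)^p`, as limit of partial sums. -/
noncomputable def tpoly (p : ℕ) (z : ℂ) : ℂ :=
  seqLim (fun N => ∑ n ∈ Finset.Icc 1 N, z ^ n / ((n : ℂ) - 1/2) ^ p)

/-- `φ(s;x) = ∑_{k=0}^∞ x^k/(k+s)`, as limit of partial sums. -/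
noncomputable def phi (s x : ℂ) : ℂ :=
  seqLim (fun N => ∑ k ∈ Finset.range N, x ^ k / ((k : ℂ) + s))


open Topology

lemma seqLim_eq {f : ℕ → ℂ} {L : ℂ} (h : Tendsto f atTop (𝓝 L)) : seqLim f = L :=
  lim_eq h

lemma re_add_le_norm (k : ℕ) (w : ℂ) : (k : ℝ) + w.re ≤ ‖(k : ℂ) + w‖ := by
  have h1 : ((k : ℂ) + w).re = (k : ℝ) + w.re := by simp
  calc (k : ℝ) + w.re = ((k : ℂ) + w).re := h1.symm
    _ ≤ |((k : ℂ) + w).re| := le_abs_self _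
    _ ≤ ‖(k : ℂ) + w‖ := by exact Complex.abs_re_le_norm _

lemma kw_ne_zero {w : ℂ} (hw : 0 < w.re) (k : ℕ) : (k : ℂ) + w ≠ 0 := by
  intro h
  have : ((k : ℂ) + w).re = 0 := by rw [h]; simp
  simp at this
  nlinarith [Nat.cast_nonneg (α := ℝ) k]

lemma norm_kw_pos {w : ℂ} (hw : 0 < w.re) (k : ℕ) : (0:ℝ) < (k : ℝ) + w.re := by
  nlinarith [Nat.cast_nonneg (α := ℝ) k]

lemma norm_kw_pos' {w : ℂ} (hw : 0 < w.re) (k : ℕ) : (0:ℝ) < ‖(k : ℂ) + w‖ :=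
  lt_of_lt_of_le (norm_kw_pos hw k) (re_add_le_norm k w)

lemma summable_sq {δ : ℝ} (hδ : 0 < δ) : Summable fun k : ℕ => (((k : ℝ) + δ) ^ 2)⁻¹ := by
  have h0 : Summable fun k : ℕ => ((k : ℝ) ^ 2)⁻¹ := by
    simpa using Real.summable_nat_rpow_inv.2 (by norm_num : (1:ℝ) < 2)
  have h1 : Summable fun k : ℕ => (((k : ℕ) + 1 : ℝ) ^ 2)⁻¹ := by
    have := (summable_nat_add_iff (f := fun k : ℕ => ((k : ℝ) ^ 2)⁻¹) 1).2 h0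
    simpa using this
  set M : ℝ := max 1 δ⁻¹ with hM
  have hM1 : (1:ℝ) ≤ M := le_max_left _ _
  have hMδ : 1 ≤ M * δ := by
    rcases le_or_gt 1 δ with h | h
    · nlinarith
    · have : δ⁻¹ ≤ M := le_max_right _ _
      calc (1:ℝ) = δ⁻¹ * δ := by field_simp
        _ ≤ M * δ := by nlinarith
  refine Summable.of_nonneg_of_le (fun k => by positivity) (fun k => ?_) (h1.mul_left (M^2))
  rw [← div_le_iff₀' (by positivity), div_eq_mul_inv, ← mul_inv, inv_le_inv₀ (by positivity) (by positivity)]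
  have : ((k:ℝ) + 1) ≤ M * ((k:ℝ) + δ) := by
    have : M * ((k:ℝ) + δ) = M * k + M * δ := by ring
    nlinarith [Nat.cast_nonneg (α := ℝ) k]
  calc ((k:ℝ)+1)^2 ≤ (M * ((k:ℝ)+δ))^2 := by nlinarith [Nat.cast_nonneg (α := ℝ) k]
    _ = ((k:ℝ)+δ)^2 * M^2 := by ring


section
variable {x : ℂ}

-- absolute summability for exponent ≥ 2
lemma summable_pow_aux (hxu : ‖x‖ = 1) {w : ℂ} (hw : 0 < w.re) {q : ℕ} (hq : 2 ≤ q) :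
    Summable fun k : ℕ => x ^ k / ((k : ℂ) + w) ^ q := by
  have hb : ∀ k : ℕ, ‖x ^ k / ((k:ℂ) + w) ^ q‖ ≤ (w.re ^ (q - 2))⁻¹ * (((k:ℝ) + w.re) ^ 2)⁻¹ := by
    intro k
    rw [norm_div, norm_pow, norm_pow, hxu, one_pow, one_div]
    have hkw : (0:ℝ) < (k:ℝ) + w.re := by positivity
    have h1 : ((k:ℝ) + w.re) ^ q ≤ ‖(k:ℂ) + w‖ ^ q :=
      pow_le_pow_left₀ (le_of_lt hkw) (by
        calc (k : ℝ) + w.re = ((k : ℂ) + w).re := by simp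
          _ ≤ |((k : ℂ) + w).re| := le_abs_self _
          _ ≤ ‖(k : ℂ) + w‖ := by
              exact Complex.abs_re_le_norm _) q
    have h2 : w.re ^ (q-2) * ((k:ℝ) + w.re) ^ 2 ≤ ((k:ℝ) + w.re) ^ q := by
      have : ((k:ℝ) + w.re) ^ q = ((k:ℝ) + w.re) ^ (q-2) * ((k:ℝ) + w.re) ^ 2 := by
        rw [← pow_add]; congr 1; omega
      rw [this]
      have : w.re ^ (q-2) ≤ ((k:ℝ) + w.re) ^ (q-2) :=
        pow_le_pow_left₀ (le_of_lt hw) (by nlinarith [Nat.cast_nonneg (α := ℝ) k]) _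
      nlinarith [pow_pos hkw 2, pow_pos hw (q-2)]
    rw [← mul_inv, inv_le_inv₀ (pow_pos (norm_kw_pos' hw k) q)
      (mul_pos (pow_pos hw _) (pow_pos hkw 2))]
    calc w.re ^ (q-2) * ((k:ℝ) + w.re) ^ 2 ≤ ((k:ℝ) + w.re) ^ q := h2
      _ ≤ ‖(k:ℂ) + w‖ ^ q := h1
  exact Summable.of_norm_bounded ((summable_sq hw).mul_left _) hb

-- Abel / Dirichlet: conditional convergence for exponent 1
lemma conv_one (hxu : ‖x‖ = 1) (hx1 : x ≠ 1) {w : ℂ} (hw : 0 < w.re) :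
    ∃ L, Tendsto (fun N => ∑ k ∈ range N, x ^ k / ((k : ℂ) + w)) atTop (𝓝 L) := by
  set a : ℕ → ℂ := fun k => ((k : ℂ) + w)⁻¹ with ha
  set G : ℕ → ℂ := fun N => ∑ i ∈ range N, x ^ i with hG
  have hGb : ∀ N, ‖G N‖ ≤ 2 / ‖x - 1‖ := by
    intro N
    have hx1' : x - 1 ≠ 0 := sub_ne_zero.2 hx1
    show ‖∑ i ∈ range N, x ^ i‖ ≤ 2 / ‖x - 1‖
    rw [geom_sum_eq hx1 N, norm_div]
    gcongr
    calc ‖x ^ N - 1‖ ≤ ‖x ^ N‖ + ‖(1:ℂ)‖ := norm_sub_le _ _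
      _ = 2 := by rw [norm_pow, hxu]; norm_num
  -- by parts
  have hbp : ∀ N, ∑ k ∈ range N, x ^ k / ((k : ℂ) + w)
      = a (N - 1) * G N - ∑ i ∈ range (N - 1), (a (i+1) - a i) * G (i+1) := by
    intro N
    have := Finset.sum_range_by_parts a (fun i => x ^ i) N
    simp only [smul_eq_mul] at this
    rw [← this]
    exact Finset.sum_congr rfl fun k _ => by rw [ha, div_eq_mul_inv, mul_comm]
  -- a tends to zero
  have ha0 : Tendsto a atTop (𝓝 0) := by
    apply squeeze_zero_norm (a := fun k : ℕ => ((k:ℝ) + w.re)⁻¹)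
    · intro k
      rw [ha, norm_inv]
      rw [inv_le_inv₀ (norm_kw_pos' hw k) (norm_kw_pos hw k)]
      calc (k : ℝ) + w.re = ((k : ℂ) + w).re := by simp
        _ ≤ |((k : ℂ) + w).re| := le_abs_self _
        _ ≤ ‖(k : ℂ) + w‖ := by
            exact Complex.abs_re_le_norm _
    · exact tendsto_inv_atTop_zero.comp
        (tendsto_atTop_add_const_right _ _ tendsto_natCast_atTop_atTop)
  -- summability of diff * G
  have hsum : Summable fun i : ℕ => (a (i+1) - a i) * G (i+1) := by
    apply Summable.of_norm_bounded (g := fun i : ℕ => (2 / ‖x - 1‖) * (((i:ℝ) + w.re) ^ 2)⁻¹)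
      ((summable_sq hw).mul_left _)
    intro i
    have hi0 : ((i:ℂ) + w) ≠ 0 := by
      intro h
      have : ((i : ℂ) + w).re = 0 := by rw [h]; simp
      simp at this; nlinarith [Nat.cast_nonneg (α := ℝ) i]
    have hi1 : ((i:ℂ) + 1 + w) ≠ 0 := by
      intro h
      have : ((i : ℂ) + 1 + w).re = 0 := by rw [h]; simp
      simp at this; nlinarith [Nat.cast_nonneg (α := ℝ) i]
    have hd : a (i+1) - a i = -(( ((i:ℂ)+1+w) * ((i:ℂ)+w))⁻¹) := by
      rw [ha]
      push_cast
      rw [inv_sub_inv hi1 hi0]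
      field_simp
      ring
    rw [hd, neg_mul, norm_neg, norm_mul, norm_inv, norm_mul]
    have hre1 : (i:ℝ) + w.re ≤ ‖(i:ℂ) + w‖ := by
      calc (i : ℝ) + w.re = ((i : ℂ) + w).re := by simp
        _ ≤ |((i : ℂ) + w).re| := le_abs_self _
        _ ≤ ‖(i : ℂ) + w‖ := by
            exact Complex.abs_re_le_norm _
    have hre2 : (i:ℝ) + w.re ≤ ‖(i:ℂ) + 1 + w‖ := by
      calc (i : ℝ) + w.re ≤ (i:ℝ) + 1 + w.re := by linarith
        _ = ((i : ℂ) + 1 + w).re := by simp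
        _ ≤ |((i : ℂ) + 1 + w).re| := le_abs_self _
        _ ≤ ‖(i:ℂ) + 1 + w‖ := by
            exact Complex.abs_re_le_norm _
    have hpos : (0:ℝ) < (i:ℝ) + w.re := norm_kw_pos hw i
    rw [mul_comm (2 / ‖x - 1‖)]
    apply mul_le_mul
    · rw [inv_le_inv₀ (mul_pos (lt_of_lt_of_le hpos hre2) (lt_of_lt_of_le hpos hre1)) (pow_pos hpos 2)]
      calc ((i:ℝ) + w.re)^2 = ((i:ℝ) + w.re) * ((i:ℝ) + w.re) := sq _
        _ ≤ ‖(i:ℂ) + 1 + w‖ * ‖(i:ℂ) + w‖ := by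
            apply mul_le_mul hre2 hre1 (le_of_lt hpos) (norm_nonneg _)
    · exact hGb _
    · exact norm_nonneg _
    · positivity
  have hT : Tendsto (fun N => ∑ i ∈ range (N-1), (a (i+1) - a i) * G (i+1)) atTop
      (𝓝 (∑' i, (a (i+1) - a i) * G (i+1))) :=
    hsum.hasSum.tendsto_sum_nat.comp (tendsto_sub_atTop_nat 1)
  have hP : Tendsto (fun N => a (N-1) * G N) atTop (𝓝 0) := by
    apply squeeze_zero_norm (a := fun N : ℕ => ‖a (N-1)‖ * (2/‖x-1‖))
    · intro N; rw [norm_mul]; exact mul_le_mul_of_nonneg_left (hGb N) (norm_nonneg _)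
    · have h1 : Tendsto (fun N : ℕ => ‖a (N-1)‖) atTop (𝓝 0) := by
        have := (ha0.comp (tendsto_sub_atTop_nat 1)).norm
        simpa using this
      simpa using h1.mul_const (2/‖x-1‖)
  exact ⟨0 - ∑' i, (a (i+1) - a i) * G (i+1), ((hP.sub hT).congr fun N => (hbp N).symm)⟩

noncomputable def S (x : ℂ) (m : ℕ) (w : ℂ) : ℂ :=
  seqLim (fun N => ∑ k ∈ Finset.range N, x ^ k / ((k : ℂ) + w) ^ (m + 1))

lemma tendsto_S (hxu : ‖x‖ = 1) (hx1 : x ≠ 1) (m : ℕ) {w : ℂ} (hw : 0 < w.re) :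
    Tendsto (fun N => ∑ k ∈ range N, x ^ k / ((k : ℂ) + w) ^ (m + 1)) atTop (𝓝 (S x m w)) := by
  rcases Nat.eq_zero_or_pos m with hm | hm
  · subst hm
    obtain ⟨L, hL⟩ := conv_one hxu hx1 hw
    have hL' : Tendsto (fun N => ∑ k ∈ range N, x ^ k / ((k : ℂ) + w) ^ (0 + 1)) atTop (𝓝 L) := by
      simpa [pow_one] using hL
    rwa [show S x 0 w = L from seqLim_eq hL']
  · have hsum := summable_pow_aux hxu (w := w) hw (q := m + 1) (by omega)
    have h := hsum.hasSum.tendsto_sum_nat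
    rwa [show S x m w = _ from seqLim_eq h]

lemma S_eq_tsum (hxu : ‖x‖ = 1) {m : ℕ} (hm : 1 ≤ m) {w : ℂ} (hw : 0 < w.re) :
    S x m w = ∑' k : ℕ, x ^ k / ((k : ℂ) + w) ^ (m + 1) :=
  seqLim_eq (summable_pow_aux hxu hw (by omega)).hasSum.tendsto_sum_nat

lemma hasDerivAt_S (hxu : ‖x‖ = 1) (hx1 : x ≠ 1) (m : ℕ) {w₀ : ℂ} (hw : 0 < w₀.re) :
    HasDerivAt (S x m) (-((m : ℂ) + 1) * S x (m + 1) w₀) w₀ := by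
  set δ := w₀.re / 2 with hδdef
  have hδ : 0 < δ := half_pos hw
  set B := Metric.ball w₀ δ with hB
  have hball : ∀ z ∈ B, δ < z.re := by
    intro z hz
    have h1 : ‖z - w₀‖ < δ := by
      rw [hB, Metric.mem_ball, dist_eq_norm] at hz; exact hz
    have h2 : |z.re - w₀.re| ≤ ‖z - w₀‖ := by
      have := Complex.abs_re_le_norm (z - w₀)
      rwa [Complex.sub_re] at this
    have h3 := abs_lt.1 (lt_of_le_of_lt h2 h1)
    have : w₀.re = 2 * δ := by rw [hδdef]; ring
    linarith [h3.1]
  have hmem : w₀ ∈ B := Metric.mem_ball_self hδ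
  have hballre : ∀ z ∈ B, 0 < z.re := fun z hz => lt_trans hδ (hball z hz)
  -- uniform convergence of derivatives
  have hu : Summable fun k : ℕ => ((m : ℝ) + 1) * (δ ^ m)⁻¹ * (((k : ℝ) + δ) ^ 2)⁻¹ :=
    (summable_sq hδ).mul_left _
  have hnormb : ∀ (k : ℕ), ∀ z ∈ B,
      ‖-((m : ℂ) + 1) * (x ^ k / ((k : ℂ) + z) ^ (m + 2))‖
        ≤ ((m : ℝ) + 1) * (δ ^ m)⁻¹ * (((k : ℝ) + δ) ^ 2)⁻¹ := by
    intro k z hz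
    have hzre := hballre z hz
    rw [norm_mul, norm_neg, norm_div, norm_pow, norm_pow, hxu, one_pow]
    have hm1 : ‖(m : ℂ) + 1‖ = (m : ℝ) + 1 := by
      rw [show ((m : ℂ) + 1) = ((m + 1 : ℕ) : ℂ) by push_cast; ring, Complex.norm_natCast]
      push_cast; ring
    rw [hm1, one_div, mul_assoc]
    gcongr
    have hkδ0 : (0:ℝ) < (k : ℝ) + δ := add_pos_of_nonneg_of_pos (Nat.cast_nonneg _) hδ
    rw [← mul_inv, inv_le_inv₀ (pow_pos (norm_kw_pos' hzre k) _)
      (mul_pos (pow_pos hδ m) (pow_pos hkδ0 2))]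
    have hkδ : (k : ℝ) + δ ≤ ‖(k : ℂ) + z‖ :=
      le_trans (by linarith [hball z hz]) (re_add_le_norm k z)
    calc δ ^ m * ((k : ℝ) + δ) ^ 2 ≤ ((k : ℝ) + δ) ^ m * ((k : ℝ) + δ) ^ 2 := by
          have h1 : δ ≤ (k : ℝ) + δ := by nlinarith [Nat.cast_nonneg (α := ℝ) k]
          have h2 : δ ^ m ≤ ((k : ℝ) + δ) ^ m := pow_le_pow_left₀ hδ.le h1 m
          nlinarith [pow_pos hkδ0 2, pow_nonneg hδ.le m]
      _ = ((k : ℝ) + δ) ^ (m + 2) := by rw [← pow_add]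
      _ ≤ ‖(k : ℂ) + z‖ ^ (m + 2) := pow_le_pow_left₀ hkδ0.le hkδ _
  have hUnif : TendstoUniformlyOn
      (fun N z => ∑ k ∈ range N, -((m : ℂ) + 1) * (x ^ k / ((k : ℂ) + z) ^ (m + 2)))
      (fun z => ∑' k : ℕ, -((m : ℂ) + 1) * (x ^ k / ((k : ℂ) + z) ^ (m + 2))) atTop B :=
    tendstoUniformlyOn_tsum_nat hu hnormb
  have hEq : Set.EqOn (fun z => ∑' k : ℕ, -((m : ℂ) + 1) * (x ^ k / ((k : ℂ) + z) ^ (m + 2)))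
      (fun z => -((m : ℂ) + 1) * S x (m + 1) z) B := by
    intro z hz
    have hzre := hballre z hz
    have : S x (m + 1) z = ∑' k : ℕ, x ^ k / ((k : ℂ) + z) ^ (m + 1 + 1) :=
      S_eq_tsum hxu (by omega) hzre
    simp only
    rw [this, tsum_mul_left]
  have hUnif' : TendstoUniformlyOn
      (fun N z => ∑ k ∈ range N, -((m : ℂ) + 1) * (x ^ k / ((k : ℂ) + z) ^ (m + 2)))
      (fun z => -((m : ℂ) + 1) * S x (m + 1) z) atTop B := hUnif.congr_right hEq
  have hDeriv : ∀ᶠ N in atTop, ∀ z ∈ B, HasDerivAt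
      (fun z => ∑ k ∈ range N, x ^ k / ((k : ℂ) + z) ^ (m + 1))
      (∑ k ∈ range N, -((m : ℂ) + 1) * (x ^ k / ((k : ℂ) + z) ^ (m + 2))) z := by
    apply Eventually.of_forall
    intro N z hz
    have hzre := hballre z hz
    apply HasDerivAt.fun_sum
    intro k _
    have hz0 : (k : ℂ) + z ≠ 0 := kw_ne_zero hzre k
    have h1 : HasDerivAt (fun z : ℂ => (k : ℂ) + z) 1 z := (hasDerivAt_id z).const_add _
    have h2 := h1.pow (m + 1)
    have h3 := (h2.inv (pow_ne_zero _ hz0)).const_mul (x ^ k)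
    have hfun : (fun z : ℂ => x ^ k * (((k : ℂ) + z) ^ (m + 1))⁻¹)
        = fun z : ℂ => x ^ k / ((k : ℂ) + z) ^ (m + 1) := by
      funext z; rw [div_eq_mul_inv]
    simp only [Pi.pow_apply, Pi.inv_apply] at h3
    rw [hfun] at h3
    convert h3 using 1
    · rfl
    rw [Nat.add_sub_cancel]
    rw [div_eq_mul_inv]
    field_simp
    push_cast
    ring
  have hPoint : ∀ z ∈ B, Tendsto
      (fun N => ∑ k ∈ range N, x ^ k / ((k : ℂ) + z) ^ (m + 1)) atTop (𝓝 (S x m z)) :=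
    fun z hz => tendsto_S hxu hx1 m (hballre z hz)
  have := hasDerivAt_of_tendstoUniformlyOn (Metric.isOpen_ball) hUnif' hDeriv hPoint hmem
  simpa using this

lemma iteratedDeriv_phi (hxu : ‖x‖ = 1) (hx1 : x ≠ 1) (m : ℕ) :
    ∀ w : ℂ, 0 < w.re →
      iteratedDeriv m (fun w => phi w x) w = (-1) ^ m * (m.factorial : ℂ) * S x m w := by
  induction m with
  | zero =>
    intro w hw
    rw [iteratedDeriv_zero]
    have : phi w x = S x 0 w := by
      rw [phi, S]
      congr 1
      funext N
      exact Finset.sum_congr rfl fun k _ => by rw [pow_one]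
    rw [this]; simp
  | succ m ih =>
    intro w hw
    rw [iteratedDeriv_succ]
    have hU : IsOpen {z : ℂ | 0 < z.re} := isOpen_lt continuous_const Complex.continuous_re
    have hev : iteratedDeriv m (fun w => phi w x)
        =ᶠ[𝓝 w] fun z => (-1) ^ m * (m.factorial : ℂ) * S x m z := by
      filter_upwards [hU.mem_nhds hw] with z hz
      exact ih z hz
    rw [hev.deriv_eq]
    have hd := (hasDerivAt_S hxu hx1 m hw).const_mul ((-1) ^ m * (m.factorial : ℂ))
    rw [hd.deriv]
    rw [Nat.factorial_succ]
    push_cast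
    ring

set_option maxHeartbeats 2000000 in
lemma tail_eq (hxu : ‖x‖ = 1) (hx1 : x ≠ 1) {q : ℕ} (hq : 1 ≤ q) (n : ℕ) :
    tpoly q x - tFin q x n = x ^ (n + 1) * S x (q - 1) ((n : ℂ) + 1/2) := by
  set a : ℂ := (n : ℂ) + 1/2 with hadef
  have hare : 0 < a.re := by
    rw [hadef]
    simp only [Complex.add_re, Complex.natCast_re]
    norm_num
    positivity
  have hT := tendsto_S hxu hx1 (q - 1) hare
  rw [show q - 1 + 1 = q from by omega] at hT
  have key : ∀ N, (∑ j ∈ Icc 1 (N + n), x ^ j / ((j : ℂ) - 1/2) ^ q)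
      = tFin q x n + x ^ (n + 1) * ∑ k ∈ range N, x ^ k / ((k : ℂ) + a) ^ q := by
    intro N
    have e2 : (Icc 1 n : Finset ℕ) = Ioc 0 n := by rw [← Finset.Icc_add_one_left_eq_Ioc]; rfl
    have e3 : (Icc (n + 1) (N + n) : Finset ℕ) = Ioc n (N + n) := by rw [← Finset.Icc_add_one_left_eq_Ioc]
    have hsplit := Finset.sum_Ioc_consecutive (fun j => x ^ j / ((j : ℂ) - 1/2) ^ q)
      (Nat.zero_le n) (Nat.le_add_left n N)
    have e1' : (Icc 1 (N + n) : Finset ℕ) = Ioc 0 (N + n) := by rw [← Finset.Icc_add_one_left_eq_Ioc]; rfl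
    rw [e1', ← hsplit, ← e2]
    congr 1
    -- tail sum
    have e4 : (Ioc n (N + n) : Finset ℕ) = Ico (n + 1) (N + n + 1) := by
      rw [Finset.Ico_add_one_add_one_eq_Ioc]
    rw [e4, Finset.sum_Ico_eq_sum_range]
    have e5 : N + n + 1 - (n + 1) = N := by omega
    rw [e5, Finset.mul_sum]
    apply Finset.sum_congr rfl
    intro i _
    have e6 : ((n + 1 + i : ℕ) : ℂ) - 1/2 = (i : ℂ) + a := by
      rw [hadef]; push_cast; ring
    rw [e6, pow_add, mul_div_assoc]
  have hT2 : Tendsto (fun N => ∑ j ∈ Icc 1 (N + n), x ^ j / ((j : ℂ) - 1/2) ^ q) atTop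
      (𝓝 (tFin q x n + x ^ (n + 1) * S x (q - 1) a)) := by
    apply Tendsto.congr (fun N => (key N).symm)
    exact ((hT.const_mul _).const_add _)
  have hT3 := (tendsto_add_atTop_iff_nat (f := fun N => ∑ j ∈ Icc 1 N, x ^ j / ((j : ℂ) - 1/2) ^ q) n).1 hT2
  have : tpoly q x = tFin q x n + x ^ (n + 1) * S x (q - 1) a := seqLim_eq hT3
  rw [this]; ring

set_option maxHeartbeats 2000000 in
lemma key (hxu : ‖x‖ = 1) (hx1 : x ≠ 1) (p' : ℕ) {n : ℕ} (hn : 1 ≤ n) {s : ℂ}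
    (hs : ‖s - (n : ℂ)‖ < 1) :
    Tendsto (fun N => ∑ k ∈ range N,
        ((k + p').choose p' : ℂ) * (-1 : ℂ) ^ k * S x (k + p') ((n : ℂ) + 1/2) * (s - n) ^ k)
      atTop (𝓝 (S x p' (s + 1/2))) := by
  set a : ℂ := (n : ℂ) + 1/2 with hadef
  set u : ℂ := s - (n : ℂ) with hudef
  set r : ℝ := ‖u‖ with hrdef
  have hr0 : 0 ≤ r := norm_nonneg _
  have hr1 : r < 1 := hs
  have hare : 0 < a.re := by
    have h : a.re = (n : ℝ) + 1/2 := by rw [hadef]; simp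
    rw [h]; positivity
  have hsre : (0:ℝ) < (s + 1/2).re := by
    have h1 : |u.re| ≤ ‖u‖ := by
      exact Complex.abs_re_le_norm u
    have h2 : u.re = s.re - n := by rw [hudef]; simp
    have h3 : s.re - n > -1 := by
      have := abs_lt.1 (lt_of_le_of_lt h1 hr1); linarith [this.1]
    have hn' : (1:ℝ) ≤ n := by exact_mod_cast hn
    have : (s + 1/2).re = s.re + 1/2 := by simp
    rw [this]; linarith
  have hja : ∀ j : ℕ, ((j : ℝ) + 3/2) ≤ ‖(j : ℂ) + a‖ := by
    intro j
    refine le_trans ?_ (re_add_le_norm j a)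
    have : a.re = (n : ℝ) + 1/2 := by rw [hadef]; simp
    rw [this]
    have hn' : (1:ℝ) ≤ n := by exact_mod_cast hn
    linarith
  have hjane : ∀ j : ℕ, ((j : ℂ) + a) ≠ 0 := fun j => kw_ne_zero hare j
  -- binomial expansion for each j
  have hbin : ∀ j : ℕ, HasSum
      (fun k => x ^ j * (((k + p').choose p' : ℂ) * (-1 : ℂ) ^ k * u ^ k / ((j : ℂ) + a) ^ (k + p' + 1)))
      (x ^ j / ((j : ℂ) + (s + 1/2)) ^ (p' + 1)) := by
    intro j
    set z : ℂ := (j : ℂ) + a with hzdef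
    have hz32 : (3/2 : ℝ) ≤ ‖z‖ := le_trans (le_add_of_nonneg_left (Nat.cast_nonneg _)) (hja j)
    have hz0 : z ≠ 0 := hjane j
    set v : ℂ := -u / z with hvdef
    have hv : ‖v‖ < 1 := by
      rw [hvdef, norm_div, norm_neg, ← hrdef, div_lt_one (by linarith)]
      linarith
    have h1v : (1 : ℂ) - v ≠ 0 := by
      intro h
      have : ‖(1 : ℂ) - v‖ = 0 := by rw [h, norm_zero]
      have h2 : (1:ℝ) - ‖v‖ ≤ ‖(1:ℂ) - v‖ := by
        have := norm_sub_norm_le (1:ℂ) v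
        simpa using this
      rw [this] at h2; linarith
    have hzu : z + u = (j : ℂ) + (s + 1/2) := by rw [hzdef, hadef, hudef]; ring
    have hzu0 : z + u ≠ 0 := by
      rw [hzu]
      intro h
      have h2 : ((j : ℂ) + (s + 1/2)).re = 0 := by rw [h]; simp
      have h3 : ((j : ℂ) + (s + 1/2)).re = (j : ℝ) + (s + 1/2).re := by simp
      rw [h3] at h2
      nlinarith [Nat.cast_nonneg (α := ℝ) j]
    have h0 := hasSum_choose_mul_geometric_of_norm_lt_one p' hv
    have h1 := h0.mul_left (x ^ j / z ^ (p' + 1))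
    convert h1 using 1
    · rfl
    · funext k
      have hvk : v ^ k = (-1 : ℂ) ^ k * u ^ k / z ^ k := by
        rw [hvdef, div_pow, neg_pow]
        try ring
      rw [hvk, pow_add, pow_add]
      field_simp
      try ring
    · have h1veq : (1 : ℂ) - v = (z + u) / z := by
        rw [hvdef]; field_simp; ring
      rw [h1veq, div_pow, ← hzu]
      rw [div_div_eq_mul_div]
      field_simp
  -- the shifted double series
  set g : ℕ × ℕ → ℂ := fun q =>
    x ^ q.2 * (((q.1 + p' + 1).choose p' : ℂ) * (-1 : ℂ) ^ (q.1 + 1) * u ^ (q.1 + 1)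
      / ((q.2 : ℂ) + a) ^ (q.1 + p' + 2)) with hgdef
  set ρ : ℝ := 2/3 * r with hρdef
  have hρ1 : ρ < 1 := by rw [hρdef]; linarith
  have hρ0 : 0 ≤ ρ := by rw [hρdef]; positivity
  set F : ℕ → ℝ := fun k => (((k + p' + 1).choose p' : ℝ)) * r ^ (k + 1) * (((3/2 : ℝ)) ^ k)⁻¹
    with hFdef
  have hFsum : Summable F := by
    have h0 : Summable (fun k : ℕ => (((k + p').choose p' : ℝ)) * ρ ^ k) :=
      (hasSum_choose_mul_geometric_of_norm_lt_one p'
        (by rwa [Real.norm_eq_abs, abs_of_nonneg hρ0])).summable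
    have h1 := (summable_nat_add_iff 1).2 h0
    apply (h1.mul_left (3/2 : ℝ)).congr
    intro k
    rw [hFdef]
    simp only
    rw [show k + 1 + p' = k + p' + 1 from by omega]
    rw [hρdef, mul_pow, show ((2:ℝ)/3) = ((3:ℝ)/2)⁻¹ from by norm_num, inv_pow, pow_succ]
    have h32 : ((3:ℝ)/2) ^ k ≠ 0 := by positivity
    field_simp
  have hGsum : Summable (fun j : ℕ => ((((j : ℝ)) + 3/2) ^ 2)⁻¹) := summable_sq (by norm_num)
  have hFGsum : Summable (fun q : ℕ × ℕ => F q.1 * ((((q.2 : ℝ)) + 3/2) ^ 2)⁻¹) :=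
    Summable.mul_of_nonneg hFsum hGsum
      (fun k => by
        rw [hFdef]; simp only
        have := pow_nonneg hr0 (k + 1)
        positivity)
      (fun j => by positivity)
  have hg : Summable g := by
    apply Summable.of_norm_bounded hFGsum
    rintro ⟨k, j⟩
    simp only [hgdef, hFdef]
    rw [norm_mul, norm_pow, hxu, one_pow, one_mul, norm_div, norm_mul, norm_mul, norm_pow,
      norm_pow, norm_pow, norm_neg, norm_one, one_pow, mul_one, Complex.norm_natCast, ← hrdef]
    have hj32 : (0:ℝ) < (j : ℝ) + 3/2 := by positivity
    have hb1 : ((j:ℝ) + 3/2) ^ (k + p' + 2) ≤ ‖(j:ℂ) + a‖ ^ (k + p' + 2) :=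
      pow_le_pow_left₀ hj32.le (hja j) _
    have hb2 : ((3/2:ℝ)) ^ k * (((j:ℝ) + 3/2) ^ 2) ≤ ((j:ℝ) + 3/2) ^ (k + p' + 2) := by
      have e1 : ((j:ℝ) + 3/2) ^ (k + p' + 2)
          = ((j:ℝ) + 3/2) ^ k * ((j:ℝ) + 3/2) ^ p' * ((j:ℝ) + 3/2) ^ 2 := by
        rw [← pow_add, ← pow_add]
      have e2 : ((3/2:ℝ)) ^ k ≤ ((j:ℝ) + 3/2) ^ k :=
        pow_le_pow_left₀ (by norm_num) (by linarith [Nat.cast_nonneg (α := ℝ) j]) _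
      have e3 : (1:ℝ) ≤ ((j:ℝ) + 3/2) ^ p' :=
        one_le_pow₀ (by linarith [Nat.cast_nonneg (α := ℝ) j])
      calc ((3/2:ℝ)) ^ k * (((j:ℝ) + 3/2) ^ 2)
          ≤ ((j:ℝ) + 3/2) ^ k * (((j:ℝ) + 3/2) ^ 2) :=
            mul_le_mul_of_nonneg_right e2 (by positivity)
        _ = ((j:ℝ) + 3/2) ^ k * 1 * (((j:ℝ) + 3/2) ^ 2) := by ring
        _ ≤ ((j:ℝ) + 3/2) ^ k * ((j:ℝ) + 3/2) ^ p' * (((j:ℝ) + 3/2) ^ 2) :=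
            mul_le_mul_of_nonneg_right
              (mul_le_mul_of_nonneg_left e3 (pow_pos hj32 k).le) (by positivity)
        _ = ((j:ℝ) + 3/2) ^ (k + p' + 2) := e1.symm
    have hnum : (0:ℝ) ≤ (((k + p' + 1).choose p' : ℝ)) * r ^ (k + 1) :=
      mul_nonneg (Nat.cast_nonneg _) (pow_nonneg hr0 _)
    have hrhs : (((k + p' + 1).choose p' : ℝ)) * r ^ (k + 1) * (((3/2 : ℝ)) ^ k)⁻¹
          * ((((j : ℝ)) + 3/2) ^ 2)⁻¹
        = ((((k + p' + 1).choose p' : ℝ)) * r ^ (k + 1))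
          / (((3/2 : ℝ)) ^ k * (((j : ℝ) + 3/2) ^ 2)) := by
      rw [mul_assoc, ← mul_inv, ← div_eq_mul_inv]
    rw [hrhs]
    exact le_trans (div_le_div_of_nonneg_left hnum
      (by positivity) (le_trans hb2 hb1)) (le_refl _)
  -- column sums (over j, for fixed k)
  have hinner : ∀ k : ℕ, HasSum (fun j => g (k, j))
      ((((k + p' + 1).choose p' : ℂ)) * (-1 : ℂ) ^ (k + 1) * u ^ (k + 1) * S x (k + p' + 1) a) := by
    intro k
    have hsum := summable_pow_aux hxu (w := a) hare (q := k + p' + 2) (by omega)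
    have hS : S x (k + p' + 1) a = ∑' j : ℕ, x ^ j / ((j : ℂ) + a) ^ (k + p' + 2) := by
      have h := S_eq_tsum hxu (m := k + p' + 1) (by omega) hare
      rwa [show k + p' + 1 + 1 = k + p' + 2 from by omega] at h
    have h1 := hsum.hasSum.mul_left
      ((((k + p' + 1).choose p' : ℂ)) * (-1 : ℂ) ^ (k + 1) * u ^ (k + 1))
    have hfun : (fun j => g (k, j)) = fun j : ℕ =>
        ((((k + p' + 1).choose p' : ℂ)) * (-1 : ℂ) ^ (k + 1) * u ^ (k + 1))
          * (x ^ j / ((j : ℂ) + a) ^ (k + p' + 2)) := by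
      funext j
      simp only [hgdef]
      ring
    rw [hfun, hS, mul_assoc]
    rw [mul_assoc] at h1
    exact h1
  have hcol := hg.hasSum.prod_fiberwise hinner
  -- row sums (over k, for fixed j)
  have hrow : ∀ j : ℕ, HasSum (fun k => g (k, j))
      (x ^ j / ((j : ℂ) + (s + 1/2)) ^ (p' + 1) - x ^ j / ((j : ℂ) + a) ^ (p' + 1)) := by
    intro j
    set f : ℕ → ℂ := fun k =>
      x ^ j * (((k + p').choose p' : ℂ) * (-1 : ℂ) ^ k * u ^ k / ((j : ℂ) + a) ^ (k + p' + 1))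
      with hfdef
    have h0 : HasSum f (x ^ j / ((j : ℂ) + (s + 1/2)) ^ (p' + 1)) := hbin j
    have hf0 : f 0 = x ^ j / ((j : ℂ) + a) ^ (p' + 1) := by
      rw [hfdef]; simp; rw [div_eq_mul_inv]
    have h1 : HasSum (fun k => f (k + 1))
        (x ^ j / ((j : ℂ) + (s + 1/2)) ^ (p' + 1) - x ^ j / ((j : ℂ) + a) ^ (p' + 1)) := by
      apply (hasSum_nat_add_iff 1).2
      rw [Finset.sum_range_one, hf0, sub_add_cancel]
      exact h0
    have hfun : (fun k => f (k + 1)) = fun k => g (k, j) := by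
      funext k
      simp only [hfdef, hgdef]
      rw [show k + 1 + p' = k + p' + 1 from by omega, show k + p' + 1 + 1 = k + p' + 2 from by omega]
    rwa [hfun] at h1
  have hswap : HasSum (fun q : ℕ × ℕ => g (q.2, q.1)) (∑' q : ℕ × ℕ, g q) :=
    (Equiv.prodComm ℕ ℕ).hasSum_iff.2 hg.hasSum
  have hD := hswap.prod_fiberwise hrow
  -- assemble
  set T : ℂ := ∑' q : ℕ × ℕ, g q with hTdef
  set E : ℕ → ℂ := fun k =>
    ((k + p').choose p' : ℂ) * (-1 : ℂ) ^ k * S x (k + p') a * u ^ k with hEdef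
  have he1 : HasSum (fun k => E (k + 1)) T := by
    have hfun : (fun k => E (k + 1)) = fun k =>
        (((k + p' + 1).choose p' : ℂ)) * (-1 : ℂ) ^ (k + 1) * u ^ (k + 1) * S x (k + p' + 1) a := by
      funext k
      simp only [hEdef]
      rw [show k + 1 + p' = k + p' + 1 from by omega]
      ring
    rw [hfun]
    exact hcol
  have he : HasSum E (T + E 0) := by
    have h := (hasSum_nat_add_iff (f := E) 1).1 he1
    rwa [Finset.sum_range_one] at h
  have hE0 : E 0 = S x p' a := by
    rw [hEdef]; simp
  have hAtend := tendsto_S hxu hx1 p' hare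
  have hDtend := hD.tendsto_sum_nat
  have hsum2 : Tendsto (fun N => ∑ j ∈ range N, x ^ j / ((j : ℂ) + (s + 1/2)) ^ (p' + 1)) atTop
      (𝓝 (T + S x p' a)) := by
    have h := hDtend.add hAtend
    apply h.congr
    intro N
    rw [← Finset.sum_add_distrib]
    exact Finset.sum_congr rfl fun j _ => by ring
  have hfin : S x p' (s + 1/2) = T + S x p' a := seqLim_eq hsum2
  have hmain := he.tendsto_sum_nat
  rw [hE0] at hmain
  rw [hfin]
  exact hmain

end

theorem stmt1 (x : ℂ) (hx : ∃ m : ℕ, 0 < m ∧ x ^ m = 1) (hx1 : x ≠ 1)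
    (p : ℕ) (hp : 1 ≤ p) (n : ℕ) (hn : 1 ≤ n) (s : ℂ) (hs : ‖s - n‖ < 1) :
    (-1 : ℂ) ^ (p - 1) * iteratedDeriv (p - 1) (fun w => phi w x) (s + 1/2)
        / ((p - 1).factorial : ℂ)
      = x ^ (-(n : ℤ) - 1) * seqLim (fun N => ∑ k ∈ Finset.range N,
          ((k + p - 1).choose (p - 1) : ℂ) * (-1 : ℂ) ^ k *
            (tpoly (k + p) x - tFin (k + p) x n) * (s - n) ^ k) := by
  obtain ⟨m, hm, hxm⟩ := hx
  have hx0 : x ≠ 0 := by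
    intro h
    rw [h, zero_pow (by omega)] at hxm
    exact zero_ne_one hxm
  have hxu : ‖x‖ = 1 := by
    have h1 : ‖x‖ ^ m = 1 := by rw [← norm_pow, hxm, norm_one]
    rcases lt_trichotomy ‖x‖ 1 with h | h | h
    · exact absurd h1 (ne_of_lt (pow_lt_one₀ (norm_nonneg _) h (by omega)))
    · exact h
    · exact absurd h1.symm (ne_of_lt (one_lt_pow₀ h (by omega)))
  obtain ⟨p', rfl⟩ : ∃ p'', p = p'' + 1 := ⟨p - 1, by omega⟩
  have hs' : ‖s - (n : ℂ)‖ < 1 := by exact hs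
  have hsre : (0:ℝ) < (s + 1/2).re := by
    have h1 : |(s - (n:ℂ)).re| ≤ ‖s - (n:ℂ)‖ := by
      exact Complex.abs_re_le_norm _
    have h2 : (s - (n:ℂ)).re = s.re - n := by simp
    have h3 : s.re - n > -1 := by
      have := abs_lt.1 (lt_of_le_of_lt h1 hs'); rw [h2] at this; linarith [this.1]
    have hn' : (1:ℝ) ≤ n := by exact_mod_cast hn
    have h4 : (s + 1/2).re = s.re + 1/2 := by simp
    rw [h4]; linarith
  simp only [show p' + 1 - 1 = p' from by omega]
  -- LHS
  have hid := iteratedDeriv_phi hxu hx1 p' (s + 1/2) hsre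
  have hfac : ((p'.factorial : ℂ)) ≠ 0 := Nat.cast_ne_zero.2 (Nat.factorial_ne_zero _)
  have h11 : ((-1:ℂ)) ^ p' * ((-1:ℂ)) ^ p' = 1 := by
    rw [← pow_add, ← two_mul, pow_mul]; norm_num
  have hLHS : (-1 : ℂ) ^ p' * iteratedDeriv p' (fun w => phi w x) (s + 1/2)
      / ((p'.factorial : ℂ)) = S x p' (s + 1/2) := by
    rw [hid, ← mul_assoc, ← mul_assoc, h11, one_mul, mul_comm ((p'.factorial : ℂ)),
      mul_div_assoc, div_self hfac, mul_one]
  rw [hLHS]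
  -- RHS
  have hseq : ∀ N, ∑ k ∈ Finset.range N,
        ((k + (p' + 1) - 1).choose p' : ℂ) * (-1 : ℂ) ^ k *
          (tpoly (k + (p' + 1)) x - tFin (k + (p' + 1)) x n) * (s - n) ^ k
      = x ^ (n + 1) * ∑ k ∈ Finset.range N,
          ((k + p').choose p' : ℂ) * (-1 : ℂ) ^ k * S x (k + p') ((n : ℂ) + 1/2)
            * (s - n) ^ k := by
    intro N
    rw [Finset.mul_sum]
    apply Finset.sum_congr rfl
    intro k _
    rw [show k + (p' + 1) - 1 = k + p' from by omega,
      show k + (p' + 1) = k + p' + 1 from by omega]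
    rw [tail_eq hxu hx1 (q := k + p' + 1) (by omega) n]
    rw [show k + p' + 1 - 1 = k + p' from by omega]
    ring
  have hk := key hxu hx1 p' hn hs'
  have hlim : seqLim (fun N => ∑ k ∈ Finset.range N,
        ((k + (p' + 1) - 1).choose p' : ℂ) * (-1 : ℂ) ^ k *
          (tpoly (k + (p' + 1)) x - tFin (k + (p' + 1)) x n) * (s - n) ^ k)
      = x ^ (n + 1) * S x p' (s + 1/2) :=
    seqLim_eq ((hk.const_mul (x ^ (n + 1))).congr fun N => (hseq N).symm)
  rw [hlim, ← mul_assoc]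
  have hzp : x ^ (-(n:ℤ) - 1) * x ^ (n + 1) = 1 := by
    rw [← zpow_natCast x (n + 1), ← zpow_add₀ hx0]
    rw [show (-(n:ℤ) - 1) + ((n + 1 : ℕ) : ℤ) = 0 from by push_cast; ring]
    exact zpow_zero x
  rw [hzp, one_mul]
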